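/- Fix an integer d ≥ 1, T > 0, and functions b, σ : {1,…,d} × ℝ → ℝ satisfying |b(i,x)−b(i,y)| + |σ(i,x)−σ(i,y)| ≤ K|x−y| and |b(i,x)| + |σ(i,x)| ≤ K(1+|x|) for some K > 0 and all i, x, y. Then for every ν ∈ 𝕄_T with kernel K_ν there exists φ ∈ ℍ_T such that φ'(t) = Σ_{i=1}^d b(i, φ(t)) K_ν(t,i) for Lebesgue-almost every t ∈ [0,T]; moreover for this φ one has ∫₀ᵀ sup_{λ∈ℝ} [ λ(φ'(t) − b̂(ν,φ(t))(t)) − (λ²/2) σ̂²(ν,φ(t))(t) ] dt = 0, and consequently the infimum over φ ∈ ℍ_T of this functional equals 0. -/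

import Mathlib

open MeasureTheory
open scoped ENNReal

/-- A kernel on `[0,T] × {1,…,d}`. -/
def IsMKernel (d : ℕ) (T : ℝ) (K : ℝ → Fin d → ℝ) : Prop :=
  (∀ i : Fin d, Measurable fun s => K s i) ∧
    ∀ s ∈ Set.Icc (0:ℝ) T, (∀ i : Fin d, 0 ≤ K s i) ∧ ∑ i : Fin d, K s i = 1

/-- `φ ∈ ℍ_T`: `φ` is absolutely continuous with `φ(0)=0` and derivative `φd` which is
measurable and square-integrable on `[0,T]`. -/
def MemHT (T : ℝ) (φ φd : ℝ → ℝ) : Prop :=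
  φ 0 = 0 ∧ Measurable φd ∧ IntegrableOn (fun s => (φd s) ^ 2) (Set.Icc (0:ℝ) T) ∧
    ∀ t ∈ Set.Icc (0:ℝ) T, φ t = ∫ s in (0:ℝ)..t, φd s

/-- The nonnegative functional
`∫₀ᵀ sup_{λ∈ℝ} [ λ(φ'(t) − b̂(ν,φ(t))) − (λ²/2) σ̂²(ν,φ(t)) ] dt`,
expressed through the kernel `K` of `ν`, as a Lebesgue integral with values in `[0,∞]`. -/
noncomputable def Ifun (d : ℕ) (T : ℝ) (b σ : Fin d → ℝ → ℝ) (φ φd : ℝ → ℝ)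
    (K : ℝ → Fin d → ℝ) : ℝ≥0∞ :=
  ∫⁻ t in Set.Ioc (0:ℝ) T,
    ⨆ lam : ℝ, ENNReal.ofReal
      (lam * (φd t - ∑ i : Fin d, b i (φ t) * K t i)
        - lam ^ 2 / 2 * ∑ i : Fin d, (σ i (φ t)) ^ 2 * K t i)

/-- Existence of a global solution to the Carathéodory ODE `φ(t) = ∫₀ᵗ F(s, φ(s)) ds`
on `[0,T]`, for `F` measurable along continuous paths, Lipschitz in the space variable
on `[0,T]` and of linear growth. Proved by Picard iteration in `C([0,T], ℝ)`. -/
lemma exists_ode_solution (T C : ℝ) (hT : 0 < T) (hC : 0 < C) (F : ℝ → ℝ → ℝ)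
    (Fmeas : ∀ g : ℝ → ℝ, Continuous g → Measurable fun s => F s (g s))
    (Flip : ∀ s ∈ Set.Icc (0:ℝ) T, ∀ x y : ℝ, |F s x - F s y| ≤ C * |x - y|)
    (Fbdd : ∀ s ∈ Set.Icc (0:ℝ) T, ∀ x : ℝ, |F s x| ≤ C * (1 + |x|)) :
    ∃ φ : ℝ → ℝ, Continuous φ ∧ (∃ M : ℝ, ∀ s : ℝ, |φ s| ≤ M) ∧
      ∀ t ∈ Set.Icc (0:ℝ) T, φ t = ∫ s in (0:ℝ)..t, F s (φ s) := by
  classical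
  haveI : Nonempty (Set.Icc (0:ℝ) T) := (Set.nonempty_Icc.mpr hT.le).to_subtype
  -- extension of a continuous map on `[0,T]` to `ℝ` by projection
  set ext : C(Set.Icc (0:ℝ) T, ℝ) → ℝ → ℝ :=
    fun f t => f (Set.projIcc 0 T hT.le t) with hext
  have ext_cont : ∀ f : C(Set.Icc (0:ℝ) T, ℝ), Continuous (ext f) := fun f =>
    f.continuous.comp continuous_projIcc
  have ext_bdd : ∀ f : C(Set.Icc (0:ℝ) T, ℝ), ∀ s : ℝ, |ext f s| ≤ ‖f‖ := fun f s => by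
    simpa [Real.norm_eq_abs] using f.norm_coe_le_norm (Set.projIcc 0 T hT.le s)
  have ext_eq : ∀ (f : C(Set.Icc (0:ℝ) T, ℝ)) (t : ℝ) (ht : t ∈ Set.Icc (0:ℝ) T),
      ext f t = f ⟨t, ht⟩ := by
    intro f t ht
    exact congrArg f (Set.projIcc_of_mem hT.le ht)
  have gmeas : ∀ f : C(Set.Icc (0:ℝ) T, ℝ), Measurable fun s => F s (ext f s) := fun f =>
    Fmeas _ (ext_cont f)
  have gint : ∀ f : C(Set.Icc (0:ℝ) T, ℝ),
      IntegrableOn (fun s => F s (ext f s)) (Set.Icc (0:ℝ) T) := by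
    intro f
    apply Measure.integrableOn_of_bounded (M := C * (1 + ‖f‖))
      (isCompact_Icc.measure_lt_top).ne (gmeas f).aestronglyMeasurable
    filter_upwards [ae_restrict_mem measurableSet_Icc] with s hs
    rw [Real.norm_eq_abs]
    refine (Fbdd s hs _).trans ?_
    have h1 := ext_bdd f s
    nlinarith
  have gII : ∀ (f : C(Set.Icc (0:ℝ) T, ℝ)) (t : ℝ), t ∈ Set.Icc (0:ℝ) T →
      IntervalIntegrable (fun s => F s (ext f s)) volume 0 t := by
    intro f t ht
    rw [intervalIntegrable_iff_integrableOn_Ioc_of_le ht.1]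
    exact (gint f).mono_set (Set.Ioc_subset_Icc_self.trans (Set.Icc_subset_Icc_right ht.2))
  have cont_prim : ∀ f : C(Set.Icc (0:ℝ) T, ℝ),
      ContinuousOn (fun t => ∫ s in (0:ℝ)..t, F s (ext f s)) (Set.Icc (0:ℝ) T) := by
    intro f
    have h := intervalIntegral.continuousOn_primitive_interval (a := (0:ℝ)) (b := T)
      (μ := volume) (f := fun s => F s (ext f s)) (by rw [Set.uIcc_of_le hT.le]; exact gint f)
    rwa [Set.uIcc_of_le hT.le] at h
  -- the Picard map
  set Φ : C(Set.Icc (0:ℝ) T, ℝ) → C(Set.Icc (0:ℝ) T, ℝ) := fun f =>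
    ⟨fun t => ∫ s in (0:ℝ)..(t:ℝ), F s (ext f s),
      (cont_prim f).comp_continuous continuous_subtype_val Subtype.mem⟩ with hΦ
  have hval : ∀ (w : C(Set.Icc (0:ℝ) T, ℝ)) (t : Set.Icc (0:ℝ) T),
      (Φ w) t = ∫ s in (0:ℝ)..(t:ℝ), F s (ext w s) := fun w t => rfl
  -- the key iterated contraction estimate
  have key : ∀ n : ℕ, ∀ f h : C(Set.Icc (0:ℝ) T, ℝ), ∀ t : Set.Icc (0:ℝ) T,
      |Φ^[n] f t - Φ^[n] h t| ≤ C ^ n * (t:ℝ) ^ n / n.factorial * dist f h := by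
    intro n
    induction n with
    | zero =>
      intro f h t
      simpa [Real.dist_eq] using ContinuousMap.dist_apply_le_dist (f := f) (g := h) t
    | succ n ih =>
      intro f h t
      rw [Function.iterate_succ_apply', Function.iterate_succ_apply']
      set u := Φ^[n] f with hu
      set v := Φ^[n] h with hv
      have ht : (t:ℝ) ∈ Set.Icc (0:ℝ) T := t.2
      have ht0 : (0:ℝ) ≤ (t:ℝ) := ht.1
      have h1 : IntervalIntegrable (fun s => F s (ext u s)) volume 0 t := gII u t ht
      have h2 : IntervalIntegrable (fun s => F s (ext v s)) volume 0 t := gII v t ht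
      have hfac : ((n.factorial : ℝ)) ≠ 0 := Nat.cast_ne_zero.mpr n.factorial_ne_zero
      have hn1 : ((n : ℝ) + 1) ≠ 0 := by positivity
      calc |(Φ u) t - (Φ v) t|
          = |∫ s in (0:ℝ)..(t:ℝ), (F s (ext u s) - F s (ext v s))| := by
            rw [hval u, hval v, intervalIntegral.integral_sub h1 h2]
        _ ≤ ∫ s in (0:ℝ)..(t:ℝ), |F s (ext u s) - F s (ext v s)| :=
            intervalIntegral.abs_integral_le_integral_abs ht0
        _ ≤ ∫ s in (0:ℝ)..(t:ℝ), (C ^ (n + 1) / n.factorial * dist f h) * s ^ n := by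
            refine intervalIntegral.integral_mono_on ht0 (h1.sub h2).abs
              ((continuous_const.mul (continuous_pow n)).intervalIntegrable 0 t) ?_
            intro s hs
            have hsI : s ∈ Set.Icc (0:ℝ) T := ⟨hs.1, hs.2.trans ht.2⟩
            have e1 : |F s (ext u s) - F s (ext v s)| ≤ C * |ext u s - ext v s| :=
              Flip s hsI _ _
            have e2 : |ext u s - ext v s| ≤ C ^ n * s ^ n / n.factorial * dist f h := by
              rw [ext_eq u s hsI, ext_eq v s hsI]
              exact ih f h ⟨s, hsI⟩
            calc |F s (ext u s) - F s (ext v s)|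
                ≤ C * (C ^ n * s ^ n / n.factorial * dist f h) :=
                  e1.trans (mul_le_mul_of_nonneg_left e2 hC.le)
              _ = (C ^ (n + 1) / n.factorial * dist f h) * s ^ n := by ring
        _ = C ^ (n + 1) * (t:ℝ) ^ (n + 1) / (n + 1).factorial * dist f h := by
            rw [intervalIntegral.integral_const_mul, integral_pow, Nat.factorial_succ]
            push_cast
            field_simp
            ring
  have keydist : ∀ n : ℕ, ∀ f h : C(Set.Icc (0:ℝ) T, ℝ),
      dist (Φ^[n] f) (Φ^[n] h) ≤ C ^ n * T ^ n / n.factorial * dist f h := by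
    intro n f h
    have hD : (0:ℝ) ≤ dist f h := dist_nonneg
    rw [ContinuousMap.dist_le (by positivity)]
    intro t
    rw [Real.dist_eq]
    refine (key n f h t).trans ?_
    have htT : (t:ℝ) ^ n ≤ T ^ n := pow_le_pow_left₀ t.2.1 t.2.2 n
    gcongr
  -- find a contracting iterate
  obtain ⟨N, hN⟩ := ((FloorSemiring.tendsto_pow_div_factorial_atTop (C * T)).eventually
    (gt_mem_nhds zero_lt_one)).exists
  have hq0 : (0:ℝ) ≤ C ^ N * T ^ N / N.factorial := by positivity
  have hq1 : C ^ N * T ^ N / N.factorial < 1 := by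
    rw [← mul_pow]
    exact hN
  have hcontr : ContractingWith ⟨_, hq0⟩ (Φ^[N]) := by
    constructor
    · exact_mod_cast hq1
    · exact LipschitzWith.of_dist_le_mul fun f h => keydist N f h
  have hx : Φ (ContractingWith.fixedPoint (Φ^[N]) hcontr)
      = ContractingWith.fixedPoint (Φ^[N]) hcontr :=
    hcontr.isFixedPt_fixedPoint_iterate
  set x := ContractingWith.fixedPoint (Φ^[N]) hcontr with hxdef
  refine ⟨ext x, ext_cont x, ⟨‖x‖, ext_bdd x⟩, ?_⟩
  intro t ht
  rw [ext_eq x t ht]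
  conv_lhs => rw [← hx]
  rfl

/-- For Lipschitz, linearly growing `b, σ` and every `ν ∈ 𝕄_T` with kernel `K`, there
exists `φ ∈ ℍ_T` with `φ'(t) = ∑_i b(i,φ(t)) K(t,i)` for a.e. `t ∈ [0,T]`; for this
`φ` the functional `∫₀ᵀ sup_{λ∈ℝ}[λ(φ' − b̂) − (λ²/2)σ̂²] dt` vanishes, and
consequently its infimum over `φ ∈ ℍ_T` equals `0`. -/
theorem exists_zero_of_rate_function (d : ℕ) (hd : 1 ≤ d) (T : ℝ) (hT : 0 < T)
    (b σ : Fin d → ℝ → ℝ) (C : ℝ) (hC : 0 < C)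
    (hlip : ∀ i : Fin d, ∀ x y : ℝ,
      |b i x - b i y| + |σ i x - σ i y| ≤ C * |x - y|)
    (hgrowth : ∀ i : Fin d, ∀ x : ℝ, |b i x| + |σ i x| ≤ C * (1 + |x|))
    (K : ℝ → Fin d → ℝ) (hK : IsMKernel d T K) :
    (∃ φ φd : ℝ → ℝ, MemHT T φ φd ∧
      (∀ᵐ t ∂(volume.restrict (Set.Icc (0:ℝ) T)),
        φd t = ∑ i : Fin d, b i (φ t) * K t i) ∧
      Ifun d T b σ φ φd K = 0) ∧
    (⨅ p : {p : (ℝ → ℝ) × (ℝ → ℝ) // MemHT T p.1 p.2},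
      Ifun d T b σ p.1.1 p.1.2 K) = 0 := by
  obtain ⟨hKmeas, hKprop⟩ := hK
  have hb_lip : ∀ i : Fin d, ∀ x y : ℝ, |b i x - b i y| ≤ C * |x - y| := fun i x y =>
    le_trans (le_add_of_nonneg_right (abs_nonneg _)) (hlip i x y)
  have hb_gr : ∀ i : Fin d, ∀ x : ℝ, |b i x| ≤ C * (1 + |x|) := fun i x =>
    le_trans (le_add_of_nonneg_right (abs_nonneg _)) (hgrowth i x)
  have hb_cont : ∀ i : Fin d, Continuous (b i) := by
    intro i
    refine (LipschitzWith.of_dist_le_mul (K := ⟨C, hC.le⟩) ?_).continuous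
    intro x y
    rw [Real.dist_eq, Real.dist_eq]
    exact hb_lip i x y
  have Fmeas : ∀ g : ℝ → ℝ, Continuous g →
      Measurable fun s => ∑ i : Fin d, b i (g s) * K s i := by
    intro g hg
    exact Finset.measurable_sum _ fun i _ =>
      (((hb_cont i).comp hg).measurable).mul (hKmeas i)
  have Flip : ∀ s ∈ Set.Icc (0:ℝ) T, ∀ x y : ℝ,
      |(∑ i : Fin d, b i x * K s i) - ∑ i : Fin d, b i y * K s i| ≤ C * |x - y| := by
    intro s hs x y
    obtain ⟨hKpos, hKsum⟩ := hKprop s hs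
    calc |(∑ i : Fin d, b i x * K s i) - ∑ i : Fin d, b i y * K s i|
        = |∑ i : Fin d, (b i x - b i y) * K s i| := by
          rw [← Finset.sum_sub_distrib]
          exact congrArg abs (Finset.sum_congr rfl fun i _ => (sub_mul _ _ _).symm)
      _ ≤ ∑ i : Fin d, |(b i x - b i y) * K s i| := Finset.abs_sum_le_sum_abs _ _
      _ ≤ ∑ i : Fin d, (C * |x - y|) * K s i := by
          refine Finset.sum_le_sum fun i _ => ?_
          rw [abs_mul, abs_of_nonneg (hKpos i)]
          exact mul_le_mul_of_nonneg_right (hb_lip i x y) (hKpos i)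
      _ = C * |x - y| := by rw [← Finset.mul_sum, hKsum, mul_one]
  have Fbdd : ∀ s ∈ Set.Icc (0:ℝ) T, ∀ x : ℝ,
      |∑ i : Fin d, b i x * K s i| ≤ C * (1 + |x|) := by
    intro s hs x
    obtain ⟨hKpos, hKsum⟩ := hKprop s hs
    calc |∑ i : Fin d, b i x * K s i|
        ≤ ∑ i : Fin d, |b i x * K s i| := Finset.abs_sum_le_sum_abs _ _
      _ ≤ ∑ i : Fin d, (C * (1 + |x|)) * K s i := by
          refine Finset.sum_le_sum fun i _ => ?_
          rw [abs_mul, abs_of_nonneg (hKpos i)]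
          exact mul_le_mul_of_nonneg_right (hb_gr i x) (hKpos i)
      _ = C * (1 + |x|) := by rw [← Finset.mul_sum, hKsum, mul_one]
  obtain ⟨φ, hφc, ⟨M, hM⟩, hφeq⟩ :=
    exists_ode_solution T C hT hC (fun t x => ∑ i : Fin d, b i x * K t i) Fmeas Flip Fbdd
  have hM0 : (0:ℝ) ≤ M := (abs_nonneg _).trans (hM 0)
  have hφ0 : φ 0 = 0 := by
    have h := hφeq 0 ⟨le_rfl, hT.le⟩
    simpa using h
  have hφdmeas : Measurable fun s => ∑ i : Fin d, b i (φ s) * K s i := Fmeas φ hφc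
  have hφdbd : ∀ s ∈ Set.Icc (0:ℝ) T,
      |∑ i : Fin d, b i (φ s) * K s i| ≤ C * (1 + M) := by
    intro s hs
    refine (Fbdd s hs (φ s)).trans ?_
    have h1 := hM s
    nlinarith
  have hsq : IntegrableOn (fun s => (∑ i : Fin d, b i (φ s) * K s i) ^ 2)
      (Set.Icc (0:ℝ) T) := by
    apply Measure.integrableOn_of_bounded (M := (C * (1 + M)) ^ 2)
      (isCompact_Icc.measure_lt_top).ne (hφdmeas.pow_const 2).aestronglyMeasurable
    filter_upwards [ae_restrict_mem measurableSet_Icc] with s hs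
    rw [Real.norm_eq_abs, abs_of_nonneg (sq_nonneg _)]
    calc (∑ i : Fin d, b i (φ s) * K s i) ^ 2
        = |∑ i : Fin d, b i (φ s) * K s i| ^ 2 := (sq_abs _).symm
      _ ≤ (C * (1 + M)) ^ 2 := pow_le_pow_left₀ (abs_nonneg _) (hφdbd s hs) 2
  have hmem : MemHT T φ (fun s => ∑ i : Fin d, b i (φ s) * K s i) :=
    ⟨hφ0, hφdmeas, hsq, hφeq⟩
  have hIfun : Ifun d T b σ φ (fun s => ∑ i : Fin d, b i (φ s) * K s i) K = 0 := by
    have hzero : ∀ t ∈ Set.Ioc (0:ℝ) T,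
        (⨆ lam : ℝ, ENNReal.ofReal
          (lam * ((fun s => ∑ i : Fin d, b i (φ s) * K s i) t
              - ∑ i : Fin d, b i (φ t) * K t i)
            - lam ^ 2 / 2 * ∑ i : Fin d, (σ i (φ t)) ^ 2 * K t i)) = 0 := by
      intro t ht
      have hKt := (hKprop t (Set.Ioc_subset_Icc_self ht)).1
      have hS : (0:ℝ) ≤ ∑ i : Fin d, (σ i (φ t)) ^ 2 * K t i :=
        Finset.sum_nonneg fun i _ => mul_nonneg (sq_nonneg _) (hKt i)
      rw [ENNReal.iSup_eq_zero]
      intro lam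
      rw [ENNReal.ofReal_eq_zero, sub_self, mul_zero, zero_sub]
      exact neg_nonpos.mpr (mul_nonneg (by positivity) hS)
    unfold Ifun
    rw [setLIntegral_congr_fun measurableSet_Ioc hzero, lintegral_zero]
  refine ⟨⟨φ, fun s => ∑ i : Fin d, b i (φ s) * K s i, hmem, ae_of_all _ fun t => rfl,
    hIfun⟩, ?_⟩
  refine le_antisymm ?_ zero_le
  exact iInf_le_of_le ⟨(φ, fun s => ∑ i : Fin d, b i (φ s) * K s i), hmem⟩
    (le_of_eq hIfun)
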